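/- Let G be a finite group of odd order and let P be a twisted subgroup of G. Then the cardinality of P divides the order of G. -/

import Mathlib

/-- A subset `P` of a group `G` is a *twisted subgroup* if `1 ∈ P` and
`a * b * a ∈ P` whenever `a, b ∈ P`. -/
def IsTwistedSubgroup {G : Type*} [Group G] (P : Set G) : Prop :=
  (1 : G) ∈ P ∧ ∀ a ∈ P, ∀ b ∈ P, a * b * a ∈ P

section Aux

variable {G : Type*} [Group G]

/-- The "sandwich" action of `G × G` on `G`. -/
instance sandwichSMul : SMul (G × G) G := ⟨fun γ x => γ.1 * x * γ.2⁻¹⟩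

theorem sandwich_smul_def (γ : G × G) (x : G) : γ • x = γ.1 * x * γ.2⁻¹ := rfl

instance sandwichMulAction : MulAction (G × G) G where
  one_smul x := by simp [sandwich_smul_def]
  mul_smul γ δ x := by simp [sandwich_smul_def, mul_assoc]

theorem odd_pow_mem {P : Set G} (hP : IsTwistedSubgroup P) {p : G} (hp : p ∈ P) :
    ∀ k : ℕ, p ^ (2 * k + 1) ∈ P := by
  intro k
  induction k with
  | zero => simpa using hp
  | succ n ih =>
      have : p * p ^ (2 * n + 1) * p ∈ P := hP.2 p hp _ ih
      have h2 : p ^ (2 * (n + 1) + 1) = p * p ^ (2 * n + 1) * p := by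
        rw [mul_assoc, ← pow_succ, ← pow_succ']
        ring_nf
      rwa [h2]

theorem inv_mem_of_twisted [Finite G] {P : Set G} (hP : IsTwistedSubgroup P) {p : G}
    (hp : p ∈ P) : p⁻¹ ∈ P := by
  have hn : 0 < orderOf p := orderOf_pos p
  have h := odd_pow_mem hP hp (orderOf p - 1)
  have hkey : p ^ (2 * (orderOf p - 1) + 1) = p⁻¹ := by
    have : p ^ (2 * (orderOf p - 1) + 1) * p = 1 := by
      rw [← pow_succ]
      have h2 : 2 * (orderOf p - 1) + 1 + 1 = 2 * orderOf p := by omega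
      rw [h2, mul_comm 2 (orderOf p), pow_mul, pow_orderOf_eq_one, one_pow]
    exact eq_inv_of_mul_eq_one_left (by simpa using this)
  rwa [hkey] at h

end Aux

/-- If `G` is a finite group of odd order and `P ⊆ G` is a twisted subgroup,
then `|P|` divides `|G|`. -/
theorem twisted_subgroup_card_dvd {G : Type*} [Group G] [Fintype G]
    (hodd : Odd (Fintype.card G)) (P : Set G) (hP : IsTwistedSubgroup P) :
    P.ncard ∣ Fintype.card G := by
  classical
  -- squaring is injective on `G`
  obtain ⟨m, hm⟩ := hodd
  have hsq_inj : Function.Injective (fun x : G => x * x) := by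
    intro x y hxy
    have key : ∀ z : G, (z * z) ^ (m + 1) = z := by
      intro z
      have : z ^ (2 * (m + 1)) = z := by
        have h1 : 2 * (m + 1) = Fintype.card G + 1 := by omega
        rw [h1, pow_succ, pow_card_eq_one, one_mul]
      calc (z * z) ^ (m + 1) = z ^ (2 * (m + 1)) := by rw [← sq, ← pow_mul]
        _ = z := this
    have := congrArg (fun w : G => w ^ (m + 1)) hxy
    simpa [key] using this
  -- squaring maps P onto P
  have hsq_maps : Set.MapsTo (fun x : G => x * x) P P := fun x hx => by
    simpa using hP.2 x hx 1 hP.1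
  have hsq_surj : Set.SurjOn (fun x : G => x * x) P P := by
    rw [(P.toFinite).surjOn_iff_bijOn_of_mapsTo hsq_maps]
    exact ((P.toFinite).injOn_iff_bijOn_of_mapsTo hsq_maps).mp (hsq_inj.injOn)
  -- the subgroup Γ of G × G
  set S : Set (G × G) := (fun p : G => (p, p⁻¹)) '' P with hS
  set Γ : Subgroup (G × G) := Subgroup.closure S with hΓ
  -- the key invariant
  have hinv : ∀ γ ∈ Γ, ∀ x ∈ P, γ.1 * x * γ.2⁻¹ ∈ P := by
    intro γ hγ
    induction hγ using Subgroup.closure_induction with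
    | mem g hg =>
        obtain ⟨p, hp, rfl⟩ := hg
        intro x hx
        simpa using hP.2 p hp x hx
    | one => intro x hx; simpa using hx
    | mul g h _ _ ihg ihh =>
        intro x hx
        have : g.1 * (h.1 * x * h.2⁻¹) * g.2⁻¹ ∈ P := ihg _ (ihh x hx)
        simpa [mul_assoc] using this
    | inv g _ ihg =>
        intro x hx
        have hmaps : Set.MapsTo (fun y : G => g.1 * y * g.2⁻¹) P P := fun y hy => ihg y hy
        have hinj : Set.InjOn (fun y : G => g.1 * y * g.2⁻¹) P :=
          fun a _ b _ hab => by
            simpa using mul_left_cancel (mul_right_cancel hab)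
        have hsurj := ((P.toFinite).injOn_iff_bijOn_of_mapsTo hmaps).mp hinj |>.surjOn
        obtain ⟨y, hy, hxy⟩ := hsurj hx
        have : g⁻¹.1 * x * g⁻¹.2⁻¹ = y := by
          simp only [Prod.fst_inv, Prod.snd_inv, inv_inv]
          rw [← hxy]
          simp [mul_assoc]
        rw [this]
        exact hy
  -- swap symmetry of Γ
  have hswap : ∀ γ ∈ Γ, (γ.2, γ.1) ∈ Γ := by
    intro γ hγ
    induction hγ using Subgroup.closure_induction with
    | mem g hg =>
        obtain ⟨p, hp, rfl⟩ := hg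
        have : ((p⁻¹, (p⁻¹)⁻¹) : G × G) ∈ S := ⟨p⁻¹, inv_mem_of_twisted hP hp, rfl⟩
        simpa using Subgroup.subset_closure this
    | one => exact one_mem Γ
    | mul g h _ _ ihg ihh => exact mul_mem ihg ihh
    | inv g _ ihg => exact inv_mem ihg
  -- the orbit of 1 under Γ is exactly P
  have horbit : MulAction.orbit Γ (1 : G) = P := by
    ext x
    constructor
    · rintro ⟨⟨γ, hγ⟩, rfl⟩
      show γ.1 * 1 * γ.2⁻¹ ∈ P
      exact hinv γ hγ 1 hP.1
    · intro hx
      obtain ⟨r, hr, hrx⟩ := hsq_surj hx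
      have hrΓ : ((r, r⁻¹) : G × G) ∈ Γ := Subgroup.subset_closure ⟨r, hr, rfl⟩
      refine ⟨⟨(r, r⁻¹), hrΓ⟩, ?_⟩
      show (r, r⁻¹).1 * 1 * (r, r⁻¹).2⁻¹ = x
      simpa using hrx
  -- counting: orbit-stabilizer
  have hcount1 : Nat.card Γ =
      Nat.card (MulAction.orbit Γ (1 : G)) * Nat.card (MulAction.stabilizer Γ (1 : G)) := by
    rw [Subgroup.card_eq_card_quotient_mul_card_subgroup (MulAction.stabilizer Γ (1 : G))]
    congr 1
    exact Nat.card_congr (MulAction.orbitEquivQuotientStabilizer Γ (1 : G)).symm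
  -- first projection
  set ψ : Γ →* G := (MonoidHom.fst G G).comp Γ.subtype with hψ
  have hcount2 : Nat.card Γ = Nat.card ψ.range * Nat.card ψ.ker := by
    rw [Subgroup.card_eq_card_quotient_mul_card_subgroup ψ.ker]
    congr 1
    exact Nat.card_congr (QuotientGroup.quotientKerEquivRange ψ).toEquiv
  -- the diagonal subgroup D₁ = {g | (g,g) ∈ Γ}
  set D₁ : Subgroup G :=
    Γ.comap ((MonoidHom.id G).prod (MonoidHom.id G)) with hD₁
  -- the kernel subgroup N = {g | (g,1) ∈ Γ}
  set N : Subgroup G := Γ.comap (MonoidHom.inr G G) with hN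
  have hND : N ≤ D₁ := by
    intro g hg
    have hg1 : ((1, g) : G × G) ∈ Γ := hg
    have hg2 : ((g, 1) : G × G) ∈ Γ := by simpa using hswap _ hg1
    have : ((g, 1) * (1, g) : G × G) ∈ Γ := mul_mem hg2 hg1
    have h' : ((g, g) : G × G) ∈ Γ := by simpa [Prod.mk_mul_mk] using this
    exact h'
  -- stabilizer ≃ D₁
  have hstabD : Nat.card (MulAction.stabilizer Γ (1 : G)) = Nat.card D₁ := by
    apply Nat.card_congr
    refine ⟨fun γ => ⟨(γ.1 : G × G).1, ?_⟩, fun g => ⟨⟨((g : G), (g : G)), g.2⟩, ?_⟩, ?_, ?_⟩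
    · have hst : (γ.1 : G × G).1 * 1 * (γ.1 : G × G).2⁻¹ = 1 := γ.2
      have heq : (γ.1 : G × G).1 = (γ.1 : G × G).2 := by
        have := hst
        rwa [mul_one, mul_inv_eq_one] at this
      have hmem : (((γ.1 : G × G).1, (γ.1 : G × G).2) : G × G) ∈ Γ := by
        simpa using γ.1.2
      rw [← heq] at hmem
      exact hmem
    · show ((g : G), (g : G)).1 * 1 * ((g : G), (g : G)).2⁻¹ = 1
      simp
    · rintro ⟨⟨⟨a, b⟩, hab⟩, hst⟩
      have heq : a = b := by
        have : a * 1 * b⁻¹ = 1 := hst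
        rwa [mul_one, mul_inv_eq_one] at this
      subst heq
      rfl
    · rintro ⟨g, hg⟩; rfl
  -- kernel ≃ N
  have hkerN : Nat.card ψ.ker = Nat.card N := by
    apply Nat.card_congr
    refine ⟨fun γ => ⟨(γ.1 : G × G).2, ?_⟩, fun g => ⟨⟨((1 : G), (g : G)), g.2⟩, ?_⟩, ?_, ?_⟩
    · have h1 : (γ.1 : G × G).1 = 1 := γ.2
      have hmem : (((γ.1 : G × G).1, (γ.1 : G × G).2) : G × G) ∈ Γ := by
        simpa using γ.1.2
      rw [h1] at hmem
      exact hmem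
    · show ψ ⟨((1 : G), (g : G)), _⟩ = 1
      rfl
    · rintro ⟨⟨⟨a, b⟩, hab⟩, hker⟩
      have ha : a = 1 := hker
      subst ha
      rfl
    · rintro ⟨g, hg⟩; rfl
  -- orbit card = P.ncard
  have horbcard : Nat.card (MulAction.orbit Γ (1 : G)) = P.ncard := by
    rw [horbit, Nat.card_coe_set_eq]
  -- finish the arithmetic
  have hrange_dvd : Nat.card ψ.range ∣ Nat.card G := Subgroup.card_subgroup_dvd_card ψ.range
  obtain ⟨t, ht⟩ : Nat.card N ∣ Nat.card D₁ := Subgroup.card_dvd_of_le hND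
  have hNpos : 0 < Nat.card N := Nat.card_pos
  have hmain : P.ncard * Nat.card D₁ = Nat.card ψ.range * Nat.card N := by
    rw [← horbcard, ← hstabD, ← hcount1, hcount2, hkerN]
  rw [ht] at hmain
  have : P.ncard * t = Nat.card ψ.range := by
    have h2 : (P.ncard * t) * Nat.card N = Nat.card ψ.range * Nat.card N := by
      rw [← hmain]; ring
    exact Nat.eq_of_mul_eq_mul_right hNpos h2
  have : P.ncard ∣ Nat.card ψ.range := ⟨t, this.symm⟩
  calc P.ncard ∣ Nat.card ψ.range := this
    _ ∣ Nat.card G := hrange_dvd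
    _ = Fintype.card G := Nat.card_eq_fintype_card
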